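/- For every integer m and nonnegative integer k: ∑_{j=0}^{k} (−1)^j·C(k,j)·2^j·T_{m−4k+3j} = (−1)^k·T_m, where T is the Tribonacci sequence extended to all integers. -/

import Mathlib

/-- Tribonacci numbers on the naturals. -/
def tribN : ℕ → ℤ
  | 0 => 0
  | 1 => 1
  | 2 => 1
  | n + 3 => tribN (n + 2) + tribN (n + 1) + tribN n

/-- Tribonacci at negative indices: `tribNeg n = T (-n)`, via `T (-n) = 2·T (3-n) - T (4-n)`. -/
def tribNeg : ℕ → ℤ
  | 0 => tribN 0
  | 1 => 2 * tribN 2 - tribN 3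
  | 2 => 2 * tribN 1 - tribN 2
  | 3 => 2 * tribN 0 - tribN 1
  | 4 => 2 * tribNeg 1 - tribN 0
  | n + 5 => 2 * tribNeg (n + 2) - tribNeg (n + 1)

/-- Tribonacci sequence extended to all integers. -/
def T (m : ℤ) : ℤ := if 0 ≤ m then tribN m.toNat else tribNeg (-m).toNat

lemma Tpos (n : ℕ) : T (n : ℤ) = tribN n := by simp [T]

lemma Tneg (n : ℕ) : T (-(n : ℤ)) = tribNeg n := by
  cases n with
  | zero => simp [T, tribN, tribNeg]
  | succ n =>
    have h : ¬ (0 ≤ -(((n+1 : ℕ)) : ℤ)) := by push_cast; omega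
    rw [T, if_neg h, neg_neg, Int.toNat_natCast]

lemma h1 (n : ℕ) : tribN n = 2 * tribN (n + 3) - tribN (n + 4) := by
  have e4 : tribN (n + 4) = tribN (n + 3) + tribN (n + 2) + tribN (n + 1) := by
    show tribN ((n+1)+3) = _; rw [tribN]
  have e3 : tribN (n + 3) = tribN (n + 2) + tribN (n + 1) + tribN n := by rw [tribN]
  rw [e4, e3]; ring

lemma h2 (n : ℕ) : tribNeg (n + 4) = 2 * tribNeg (n + 1) - tribNeg n := by
  cases n with
  | zero => rfl
  | succ n => show tribNeg (n + 5) = _; rw [tribNeg]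

lemma key (m : ℤ) : T (m - 4) = 2 * T (m - 1) - T m := by
  rcases le_or_gt m 0 with h | h
  · obtain ⟨n, rfl⟩ : ∃ n : ℕ, m = -(n : ℤ) := ⟨(-m).toNat, by omega⟩
    have e4 : -(n : ℤ) - 4 = -((n + 4 : ℕ) : ℤ) := by push_cast; ring
    have e1 : -(n : ℤ) - 1 = -((n + 1 : ℕ) : ℤ) := by push_cast; ring
    rw [e4, e1, Tneg, Tneg, Tneg, h2]
  · rcases lt_or_ge m 4 with h4 | h4
    · interval_cases m <;> norm_num [T, tribN, tribNeg] <;> rfl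
    · obtain ⟨n, rfl⟩ : ∃ n : ℕ, m = ((n : ℤ) + 4) := ⟨(m - 4).toNat, by omega⟩
      have e4 : (n : ℤ) + 4 - 4 = ((n : ℕ) : ℤ) := by ring
      have e1 : (n : ℤ) + 4 - 1 = ((n + 3 : ℕ) : ℤ) := by push_cast; ring
      have e0 : (n : ℤ) + 4 = ((n + 4 : ℕ) : ℤ) := by push_cast; ring
      rw [e4, e1, e0, Tpos, Tpos, Tpos, ← h1]

theorem stmt16 : ∀ (m : ℤ) (k : ℕ),
    ∑ j ∈ Finset.range (k + 1),
        (-1 : ℤ) ^ j * (k.choose j : ℤ) * 2 ^ j * T (m - 4 * k + 3 * j) =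
      (-1 : ℤ) ^ k * T m := by
  intro m k
  induction k generalizing m with
  | zero => simp
  | succ k ih =>
    have hsplit := Finset.sum_choose_succ_mul
      (fun i _ => (-1 : ℤ) ^ i * 2 ^ i * T (m - 4 * (k + 1 : ℕ) + 3 * i)) k
    have lhs_eq : ∑ j ∈ Finset.range (k + 1 + 1),
        (-1 : ℤ) ^ j * ((k+1).choose j : ℤ) * 2 ^ j * T (m - 4 * (k+1 : ℕ) + 3 * j)
        = ∑ i ∈ Finset.range (k + 2), ((k + 1).choose i : ℤ) *
            ((-1 : ℤ) ^ i * 2 ^ i * T (m - 4 * (k + 1 : ℕ) + 3 * i)) := by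
      apply Finset.sum_congr rfl
      intro i _
      ring
    rw [lhs_eq, hsplit]
    have s1 : ∑ i ∈ Finset.range (k + 1), ((k).choose i : ℤ) *
        ((-1 : ℤ) ^ i * 2 ^ i * T (m - 4 * (k + 1 : ℕ) + 3 * i))
        = (-1 : ℤ) ^ k * T (m - 4) := by
      rw [← ih (m - 4)]
      apply Finset.sum_congr rfl
      intro i _
      have : m - 4 * ((k : ℤ) + 1) + 3 * i = m - 4 - 4 * k + 3 * i := by ring
      push_cast
      rw [this]
      ring
    have s2 : ∑ i ∈ Finset.range (k + 1), ((k).choose i : ℤ) *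
        ((-1 : ℤ) ^ (i + 1) * 2 ^ (i + 1) * T (m - 4 * (k + 1 : ℕ) + 3 * ((i + 1 : ℕ) : ℤ)))
        = -2 * ((-1 : ℤ) ^ k * T (m - 1)) := by
      rw [← ih (m - 1), Finset.mul_sum]
      apply Finset.sum_congr rfl
      intro i _
      have : m - 4 * ((k : ℤ) + 1) + 3 * (((i : ℕ) : ℤ) + 1) = m - 1 - 4 * k + 3 * i := by ring
      push_cast
      rw [this]
      ring
    rw [s1, s2, key m]
    ring
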